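/- Let G be a graph and let u, v, w be three vertices forming a triangle (pairwise adjacent) such that u and v each have degree exactly 2 in G (their only neighbors being the other two triangle vertices). Then every RED:OLD set of G contains all three vertices u, v, w. -/

import Mathlib

open scoped symmDiff

/-- `S` is a redundant OLD set of `G` (characterization): every vertex is
open-dominated at least twice and every pair of distinct vertices is
2-distinguished by `S`. -/
def SimpleGraph.IsREDOLDSet' {V : Type*} (G : SimpleGraph V) (S : Set V) : Prop :=
  (∀ v : V, 2 ≤ (G.neighborSet v ∩ S).encard) ∧
  ∀ u v : V, u ≠ v →
    2 ≤ ((G.neighborSet u ∩ S) ∆ (G.neighborSet v ∩ S)).encard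

lemma pair_sub {V : Type*} {s : Set V} {a b : V} (hs : s ⊆ {a, b})
    (h2 : 2 ≤ s.encard) : a ∈ s ∧ b ∈ s := by
  have hle : ({a, b} : Set V).encard ≤ 2 := by
    calc ({a, b} : Set V).encard ≤ ({b} : Set V).encard + 1 := Set.encard_insert_le _ _
    _ ≤ 2 := by rw [Set.encard_singleton]; norm_num
  have hfin : ({a, b} : Set V).Finite := (Set.finite_singleton b).insert a
  have : s = {a, b} := hfin.eq_of_subset_of_encard_le' hs (hle.trans h2)
  rw [this]
  exact ⟨Set.mem_insert _ _, Set.mem_insert_of_mem _ rfl⟩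

theorem triangle_subset_redold {V : Type*} (G : SimpleGraph V) (u v w : V)
    (huv : G.Adj u v) (huw : G.Adj u w) (hvw : G.Adj v w)
    (hu : G.neighborSet u = {v, w}) (hv : G.neighborSet v = {u, w})
    (S : Set V) (hS : G.IsREDOLDSet' S) :
    u ∈ S ∧ v ∈ S ∧ w ∈ S := by
  have h1 := pair_sub (s := G.neighborSet u ∩ S) (a := v) (b := w)
    (by rw [hu]; exact Set.inter_subset_left) (hS.1 u)
  have h2 := pair_sub (s := G.neighborSet v ∩ S) (a := u) (b := w)
    (by rw [hv]; exact Set.inter_subset_left) (hS.1 v)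
  exact ⟨h2.1.2, h1.1.2, h1.2.2⟩
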